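/- Let (G, l) be a connected finite labelled graph with at least two edges and no l-separating edge, and suppose G contains a loop e. Then G∖e is an element of X(G,l), i.e. G∖e is non-empty and has a connected component with non-trivial fundamental group or with at least two labelled vertices. -/

import Mathlib

open scoped Classical

noncomputable section

universe u v

/-- A finite multigraph (loops and multiple edges allowed): a finite vertex
type, a finite edge type and an endpoint map assigning to each edge an
unordered pair of vertices. -/
structure MGraph where
  V : Type
  E : Type
  [fV : Fintype V]
  [fE : Fintype E]
  ends : E → Sym2 V

attribute [instance] MGraph.fV MGraph.fE

namespace MGraph

variable (G : MGraph)

/-- The valence of a vertex `v` in the (edge-induced) subgraph `H` of `G`: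
the number of half-edges of `H` adjacent to `v` (a loop counts twice). -/
def valence (H : Finset G.E) (v : G.V) : ℕ :=
  ∑ e ∈ H, (if G.ends e = Sym2.diag v then 2 else if v ∈ G.ends e then 1 else 0)

/-- `v` is a vertex of the edge-induced subgraph `H`. -/
def vertexIn (H : Finset G.E) (v : G.V) : Prop := ∃ e ∈ H, v ∈ G.ends e

/-- Two vertices of `G` are connected by an edge path within the subgraph `H`. -/
def vconn (H : Finset G.E) : G.V → G.V → Prop :=
  Relation.ReflTransGen (fun a b => ∃ e ∈ H, G.ends e = s(a, b))

/-- The graph `G` is connected. -/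
def Conn : Prop := ∀ u v : G.V, G.vconn Finset.univ u v

/-- `G` has no isolated vertices. -/
def NoIsolated : Prop := ∀ v : G.V, ∃ e : G.E, v ∈ G.ends e

/-- The subgraph `H` has a connected component with non-trivial fundamental
group, i.e. `H` contains a cycle: equivalently, `H` contains a non-empty edge
subset in which no vertex has valence one. -/
def hasCycle (H : Finset G.E) : Prop :=
  ∃ S : Finset G.E, S ⊆ H ∧ S.Nonempty ∧ ∀ v, G.valence S v ≠ 1

/-- Defining condition of the poset `X(G,l)`: the subgraph `H` has a connected
component with non-trivial fundamental group, or a connected component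
containing at least two labelled vertices. -/
def inX (l : Finset G.V) (H : Finset G.E) : Prop :=
  G.hasCycle H ∨ ∃ u v, u ∈ l ∧ v ∈ l ∧ u ≠ v ∧ G.vconn H u v

/-- The poset `X(G,l)` of proper subgraphs of `G` having a connected component
with non-trivial fundamental group or with at least two labelled vertices,
ordered by inclusion. -/
def XP (l : Finset G.V) : Type :=
  {H : Finset G.E // H ⊂ Finset.univ ∧ G.inX l H}

instance (l : Finset G.V) : PartialOrder (G.XP l) :=
  inferInstanceAs (PartialOrder {_H : Finset G.E // _})

/-- A core subgraph of the labelled graph `(G,l)`: a non-empty subgraph in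
which every vertex of valence one is labelled. -/
def IsCore (l : Finset G.V) (H : Finset G.E) : Prop :=
  H.Nonempty ∧ ∀ v, G.valence H v = 1 → v ∈ l

/-- The edge `e` is separating: removing an interior point of `e` disconnects
`G`; combinatorially, `e` is not a loop and its two endpoints are not connected
in the graph with `e` deleted (in particular, leaves are separating). -/
def Separating (e : G.E) : Prop :=
  ∀ a b, G.ends e = s(a, b) → ¬ G.vconn (Finset.univ.erase e) a b

/-- The edge `e` of `(G,l)` is `l`-separating: it is separating, one of the
components of `G` minus the interior of `e` contains all labelled vertices, and
`G` with `e` deleted satisfies the defining condition of `X(G,l)`. -/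
def LSep (l : Finset G.V) (e : G.E) : Prop :=
  G.Separating e ∧
  (∃ a, a ∈ G.ends e ∧ ∀ u ∈ l, G.vconn (Finset.univ.erase e) a u) ∧
  G.inX l (Finset.univ.erase e)

end MGraph


namespace MGraph

variable (G : MGraph)

lemma vconn_mono {H K : Finset G.E} (h : H ⊆ K) {u v : G.V} :
    G.vconn H u v → G.vconn K u v :=
  Relation.ReflTransGen.mono (p := fun a b => ∃ e ∈ K, G.ends e = s(a, b))
    (fun _ _ ⟨f, hf, he⟩ => ⟨f, h hf, he⟩) u v

lemma vconn_symm {H : Finset G.E} {u v : G.V} :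
    G.vconn H u v → G.vconn H v u :=
  fun h => (@Relation.ReflTransGen.stdSymm _ (fun a b => ∃ e ∈ H, G.ends e = s(a, b))
    ⟨fun _ _ ⟨f, hf, he⟩ => ⟨f, hf, by rw [he, Sym2.eq_swap]⟩⟩).symm _ _ h

lemma vconn_erase_loop {e : G.E} {a : G.V} (hl : G.ends e = Sym2.diag a)
    {H : Finset G.E} {u v : G.V} (h : G.vconn H u v) :
    G.vconn (H.erase e) u v := by
  induction h using Relation.ReflTransGen.head_induction_on with
  | refl => exact Relation.ReflTransGen.refl
  | head hr _ ih =>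
    obtain ⟨f, hf, he⟩ := hr
    by_cases hfe : f = e
    · subst hfe
      rw [hl, Sym2.diag, Sym2.eq_iff] at he
      obtain ⟨rfl, rfl⟩ | ⟨rfl, rfl⟩ := he <;> exact ih
    · exact Relation.ReflTransGen.head ⟨f, Finset.mem_erase.mpr ⟨hfe, hf⟩, he⟩ ih

/-- From valence one, extract the unique edge at `c`. -/
lemma exists_edge_of_valence_one {H : Finset G.E} {c : G.V}
    (h : G.valence H c = 1) :
    ∃ e' ∈ H, c ∈ G.ends e' ∧ G.ends e' ≠ Sym2.diag c ∧
      ∀ f ∈ H, c ∈ G.ends f → f = e' := by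
  classical
  set t : G.E → ℕ := fun f =>
    if G.ends f = Sym2.diag c then 2 else if c ∈ G.ends f then 1 else 0 with ht
  have hsum : ∑ f ∈ H, t f = 1 := h
  have hex : ∃ f ∈ H, t f ≠ 0 := by
    by_contra hc
    push_neg at hc
    have : ∑ f ∈ H, t f = 0 := Finset.sum_eq_zero (fun f hf => hc f hf)
    omega
  obtain ⟨e', he'H, he'⟩ := hex
  have hle : t e' ≤ 1 := by
    rw [← hsum]
    exact Finset.single_le_sum (fun f _ => Nat.zero_le _) he'H
  have hte : t e' = 1 := by omega
  have hnd : G.ends e' ≠ Sym2.diag c := by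
    intro hd; simp [ht, hd] at hte
  have hmem : c ∈ G.ends e' := by
    by_contra hm
    simp [ht, hnd, hm] at hte
  refine ⟨e', he'H, hmem, hnd, ?_⟩
  intro f hfH hcf
  by_contra hne
  have htf : 1 ≤ t f := by
    simp only [ht]
    split <;> simp [hcf]
  have hsub : ({e', f} : Finset G.E) ⊆ H := by
    intro x hx
    rcases Finset.mem_insert.mp hx with rfl | hx
    · exact he'H
    · exact (Finset.mem_singleton.mp hx) ▸ hfH
  have h2 : ∑ x ∈ ({e', f} : Finset G.E), t x ≤ ∑ x ∈ H, t x :=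
    Finset.sum_le_sum_of_subset hsub
  rw [Finset.sum_pair (fun h => hne h.symm)] at h2
  omega

/-- Excision: if the only edge of `H` at `c` is `e'` with ends `s(b,c)`,
then connectivity avoiding `c` can avoid `e'`. -/
lemma excise {H : Finset G.E} {e' : G.E} {b c : G.V} (hbc : b ≠ c)
    (hends : G.ends e' = s(b, c))
    (honly : ∀ f ∈ H, c ∈ G.ends f → f = e') :
    ∀ x v : G.V, G.vconn H x v → v ≠ c →
      (x = c → G.vconn (H.erase e') b v) ∧ (x ≠ c → G.vconn (H.erase e') x v) := by
  intro x v h hv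
  induction h using Relation.ReflTransGen.head_induction_on with
  | refl => exact ⟨fun hxc => absurd hxc hv, fun _ => Relation.ReflTransGen.refl⟩
  | @head p q hr hqv ih =>
    obtain ⟨f, hf, he⟩ := hr
    by_cases hqc : q = c
    · have hfc : c ∈ G.ends f := by
        rw [he, ← hqc]; exact Sym2.mem_mk_right p q
      have hfe : f = e' := honly f hf hfc
      rw [hfe, hends] at he
      -- he : s(p, q) = s(b, c), q = c
      have hpb : p = b := by
        rcases Sym2.eq_iff.mp he with ⟨h1, _⟩ | ⟨h1, _⟩
        · exact h1.symm
        · exact absurd (h1.trans hqc) hbc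
      refine ⟨fun hpc => absurd (hpb.symm.trans hpc) hbc, fun _ => ?_⟩
      rw [hpb]
      exact ih.1 hqc
    · have hstep : G.vconn (H.erase e') q v := ih.2 hqc
      constructor
      · intro hpc
        have hfc : c ∈ G.ends f := by
          rw [he, ← hpc]; exact Sym2.mem_mk_left p q
        have hfe : f = e' := honly f hf hfc
        rw [hfe, hends] at he
        -- he : s(p,q) = s(b,c)
        rcases Sym2.eq_iff.mp he with ⟨_, h2⟩ | ⟨h1, _⟩
        · exact absurd h2.symm hqc
        · rw [h1]; exact hstep
      · intro hpc
        have hfne : f ≠ e' := by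
          intro hfe
          rw [hfe, hends] at he
          rcases Sym2.eq_iff.mp he with ⟨_, h2⟩ | ⟨_, h2⟩
          · exact hqc h2.symm
          · exact hpc h2.symm
        exact Relation.ReflTransGen.head ⟨f, Finset.mem_erase.mpr ⟨hfne, hf⟩, he⟩ hstep

/-- If every edge of `K` at `c` is a loop at `c`, then `c` is connected only to itself. -/
lemma isolated {K : Finset G.E} {c : G.V}
    (h : ∀ f ∈ K, c ∈ G.ends f → G.ends f = Sym2.diag c) :
    ∀ x z : G.V, G.vconn K x z → x = c → z = c := by
  intro x z hc
  induction hc using Relation.ReflTransGen.head_induction_on with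
  | refl => exact fun hh => hh
  | @head p q hr _ ih =>
    intro hpc
    obtain ⟨f, hf, he⟩ := hr
    have hfc : c ∈ G.ends f := by
      rw [he, ← hpc]; exact Sym2.mem_mk_left p q
    have hd : s(p, q) = s(c, c) := by rw [← he]; exact h f hf hfc
    have hqc : q = c := by
      rcases Sym2.eq_iff.mp hd with ⟨_, h2⟩ | ⟨_, h2⟩ <;> exact h2
    exact ih hqc

end MGraph


/-- Let `(G,l)` be a connected finite labelled graph with at
least two edges and no `l`-separating edge, and let `e` be a loop of `G`. Then
`G ∖ e` is an element of `X(G,l)`: it is non-empty, a proper subgraph, and has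
a connected component with non-trivial fundamental group or with at least two
labelled vertices. -/
theorem loop_complement_in_XP
    (G : MGraph) (l : Finset G.V) (hconn : G.Conn)
    (hE : 2 ≤ Fintype.card G.E)
    (hnosep : ¬ ∃ e' : G.E, G.LSep l e')
    (e : G.E) (hloop : ∃ a : G.V, G.ends e = Sym2.diag a) :
    (Finset.univ.erase e).Nonempty ∧
    Finset.univ.erase e ⊂ (Finset.univ : Finset G.E) ∧
    G.inX l (Finset.univ.erase e) := by
  classical
  obtain ⟨a, ha⟩ := hloop
  set H := (Finset.univ.erase e : Finset G.E) with hH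
  have hne : H.Nonempty := by
    have hcard : 1 < (Finset.univ : Finset G.E).card := by
      rw [Finset.card_univ]; omega
    obtain ⟨f, hf, hfe⟩ := Finset.exists_mem_ne hcard e
    exact ⟨f, Finset.mem_erase.mpr ⟨hfe, hf⟩⟩
  refine ⟨hne, Finset.erase_ssubset (Finset.mem_univ e), ?_⟩
  by_contra hX
  rw [MGraph.inX] at hX
  push_neg at hX
  obtain ⟨hnocyc, hnopair⟩ := hX
  -- all vertices are connected in H since e is a loop
  have htot : ∀ u v : G.V, G.vconn H u v := fun u v =>
    G.vconn_erase_loop ha (hconn u v)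
  -- labels: at most one
  have hsmall : ∀ u v : G.V, u ∈ l → v ∈ l → u = v := by
    intro u v hu hv
    by_contra huv
    exact hnopair u v hu hv huv (htot u v)
  -- H has no cycle, so some vertex has valence one
  have hval : ∃ c : G.V, G.valence H c = 1 := by
    by_contra hc
    push_neg at hc
    exact hnocyc ⟨H, Finset.Subset.refl H, hne, hc⟩
  obtain ⟨c, hc⟩ := hval
  obtain ⟨e', he'H, hmem, hnd, honly⟩ := G.exists_edge_of_valence_one hc
  have he'ne : e' ≠ e := (Finset.mem_erase.mp he'H).1
  -- the other endpoint
  set b := Sym2.Mem.other hmem with hb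
  have hbs : s(c, b) = G.ends e' := Sym2.other_spec hmem
  have hends : G.ends e' = s(b, c) := by rw [← hbs, Sym2.eq_swap]
  have hdiag : Sym2.diag c = s(c, c) := rfl
  have hbc : b ≠ c := by
    intro hbceq
    apply hnd
    rw [hends, hbceq, hdiag]
  -- c is only met by loops in univ.erase e'
  have hloops : ∀ f ∈ (Finset.univ.erase e' : Finset G.E),
      c ∈ G.ends f → G.ends f = Sym2.diag c := by
    intro f hfK hcf
    have hfne' : f ≠ e' := (Finset.mem_erase.mp hfK).1
    by_cases hfe : f = e
    · subst hfe
      rw [ha] at hcf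
      have hcf' : c ∈ s(a, a) := hcf
      have hca : c = a := by
        rcases Sym2.mem_iff.mp hcf' with h | h <;> exact h
      rw [ha, hca]
    · have hfH : f ∈ H := Finset.mem_erase.mpr ⟨hfe, Finset.mem_univ f⟩
      exact absurd (honly f hfH hcf) hfne'
  have hiso := G.isolated hloops
  -- assemble the l-separating edge e'
  apply hnosep
  refine ⟨e', ?_, ?_, ?_⟩
  · -- separating
    intro x y hxy hvc
    rw [hends, Sym2.eq_iff] at hxy
    rcases hxy with ⟨h1, h2⟩ | ⟨h1, h2⟩
    · rw [← h1, ← h2] at hvc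
      exact hbc (hiso c b (G.vconn_symm hvc) rfl)
    · rw [← h1, ← h2] at hvc
      exact hbc (hiso c b hvc rfl)
  · -- one side contains all labels
    have hsub : H.erase e' ⊆ Finset.univ.erase e' := by
      intro f hf
      obtain ⟨h1, h2⟩ := Finset.mem_erase.mp hf
      exact Finset.mem_erase.mpr ⟨h1, Finset.mem_univ f⟩
    by_cases hcl : c ∈ l
    · refine ⟨c, hmem, ?_⟩
      intro u hu
      rw [hsmall u c hu hcl]
      exact Relation.ReflTransGen.refl
    · refine ⟨b, by rw [hends]; exact Sym2.mem_mk_left b c, ?_⟩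
      intro u hu
      have huc : u ≠ c := fun h => hcl (h ▸ hu)
      have := (G.excise hbc hends honly b u (htot b u) huc).2 hbc
      exact G.vconn_mono hsub this
  · -- the loop e gives a cycle in univ.erase e'
    left
    refine ⟨{e}, ?_, Finset.singleton_nonempty e, ?_⟩
    · intro f hf
      rw [Finset.mem_singleton] at hf
      subst hf
      exact Finset.mem_erase.mpr ⟨he'ne.symm, Finset.mem_univ f⟩
    · intro v
      simp only [MGraph.valence, Finset.sum_singleton]
      by_cases hva : v = a
      · subst hva
        rw [if_pos ha]
        omega
      · have h1 : G.ends e ≠ Sym2.diag v := by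
          rw [ha]
          intro h
          exact hva (Sym2.diag_injective h).symm
        have h2 : v ∉ G.ends e := by
          rw [ha, Sym2.diag]
          intro h
          rcases Sym2.mem_iff.mp h with h | h <;> exact hva h
        rw [if_neg h1, if_neg h2]
        omega
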